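/- arXiv:1901.01014 — 9 statements merged into one kernel-verified Lean document; each statement's English description precedes it below -/
import Mathlib

section
/- In an enhanced Leibniz algebra, for every u, v ∈ V and w, w' ∈ W one has (1) t(w) ∘ˢ t(w') = 0; (2) u ∘ˢ [v, t(w)] = v ∘ˢ [u, t(w)] + t(w) ∘ˢ [u,v]; (3) [v, t(w)] = 2 t(v ∘ˢ t(w)). -/
/-- Consequences of the polarization identities in an enhanced Leibniz algebra. -/
theorem ela_corollary
    {K : Type*} [Field K] (h2 : (2 : K) ≠ 0)
    {V W : Type*} [AddCommGroup V] [Module K V] [AddCommGroup W] [Module K W]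
    (t : W →ₗ[K] V) (br : V →ₗ[K] V →ₗ[K] V) (c : V →ₗ[K] V →ₗ[K] W)
    (leib : ∀ v₁ v₂ v₃ : V, br v₁ (br v₂ v₃) = br (br v₁ v₂) v₃ + br v₂ (br v₁ v₃))
    (axa : ∀ (w : W) (v : V), br (t w) v = 0)
    (axb : ∀ w : W, c (t w) (t w) = 0)
    (axc : ∀ u v : V, (2 : K)⁻¹ • (c u (br v v) + c (br v v) u)
            = (2 : K)⁻¹ • (c v (br u v) + c (br u v) v))
    (axd : ∀ v : V, br v v = t (c v v)) :
    (∀ w w' : W, (2 : K)⁻¹ • (c (t w) (t w') + c (t w') (t w)) = 0) ∧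
    (∀ (u v : V) (w : W),
        (2 : K)⁻¹ • (c u (br v (t w)) + c (br v (t w)) u)
          = (2 : K)⁻¹ • (c v (br u (t w)) + c (br u (t w)) v)
            + (2 : K)⁻¹ • (c (t w) (br u v) + c (br u v) (t w))) ∧
    (∀ (v : V) (w : W),
        br v (t w) = (2 : K) • t ((2 : K)⁻¹ • (c v (t w) + c (t w) v))) := by
  have hinv : (2 : K)⁻¹ ≠ 0 := inv_ne_zero h2
  have axc' : ∀ u v : V, c u (br v v) + c (br v v) u = c v (br u v) + c (br u v) v := by
    intro u v
    exact smul_right_injective W hinv (axc u v)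
  have key0 : ∀ w w' : W, c (t w) (t w') + c (t w') (t w) = 0 := by
    intro w w'
    have h := axb (w + w')
    simp only [map_add, LinearMap.add_apply, axb] at h
    linear_combination (norm := abel) h
  refine ⟨fun w w' => by rw [key0 w w', smul_zero], ?_, ?_⟩
  · intro u v w
    have hz : c (t w) (br u (t w)) + c (br u (t w)) (t w) = 0 := by
      have h := axc' u (t w)
      simp only [axa, map_zero, LinearMap.zero_apply, zero_add, add_zero] at h
      linear_combination (norm := abel) -h
    have h1 := axc' u (v + t w)
    simp only [map_add, LinearMap.add_apply, axa, map_zero, LinearMap.zero_apply,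
      zero_add, add_zero] at h1
    have h0 := axc' u v
    rw [← smul_add]
    congr 1
    linear_combination (norm := abel) h1 - h0 + hz
  · intro v w
    have h := axd (v + t w)
    simp only [map_add, LinearMap.add_apply, axa, axb, map_zero, LinearMap.zero_apply,
      zero_add, add_zero] at h
    rw [axd v] at h
    rw [map_smul, smul_smul, mul_inv_cancel₀ h2, one_smul, map_add]
    linear_combination (norm := abel) h
end

section
/- If (t : W → V, [·,·], ∘) is a symmetric enhanced Leibniz algebra whose underlying Leibniz bracket is a Lie bracket (i.e. [v,v] = 0 for all v ∈ V), then the symmetric bilinear form ∘ with values in W is invariant under the Lie algebra (V,[·,·]): for all v, v', v'' ∈ V one has v ∘ [v',v''] = [v,v'] ∘ v''. -/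
/-- In a symmetric enhanced Leibniz algebra whose underlying Leibniz bracket is a
Lie bracket, the symmetric bilinear form `∘` is invariant. -/
theorem sela_lie_invariant_form
    {K : Type*} [Field K] (h2 : (2 : K) ≠ 0)
    {V W : Type*} [AddCommGroup V] [Module K V] [AddCommGroup W] [Module K W]
    (t : W →ₗ[K] V) (br : V →ₗ[K] V →ₗ[K] V) (c : V →ₗ[K] V →ₗ[K] W)
    (leib : ∀ v₁ v₂ v₃ : V, br v₁ (br v₂ v₃) = br (br v₁ v₂) v₃ + br v₂ (br v₁ v₃))
    (axa : ∀ (w : W) (v : V), br (t w) v = 0)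
    (axb : ∀ w : W, c (t w) (t w) = 0)
    (axc : ∀ u v : V, (2 : K)⁻¹ • (c u (br v v) + c (br v v) u)
            = (2 : K)⁻¹ • (c v (br u v) + c (br u v) v))
    (axd : ∀ v : V, br v v = t (c v v))
    (hsym : ∀ u v : V, c u v = c v u)
    (hlie : ∀ v : V, br v v = 0) :
    ∀ v v' v'' : V, c v (br v' v'') = c (br v v') v'' := by
  -- Step 1: c v (br u v) = 0 for all u, v
  have key : ∀ u v : V, c v (br u v) = 0 := by
    intro u v
    have h := axc u v
    rw [hlie v] at h
    simp only [map_zero, LinearMap.zero_apply, add_zero, smul_zero] at h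
    rw [hsym (br u v) v, ← two_smul K] at h
    have h' := h.symm
    rw [smul_smul, inv_mul_cancel₀ h2, one_smul] at h'
    exact h'
  -- Step 2: polarization of key
  have pol : ∀ u v w : V, c v (br u w) = - c w (br u v) := by
    intro u v w
    have h := key u (v + w)
    simp only [map_add, LinearMap.add_apply] at h
    rw [key u v, key u w] at h
    -- h : 0 + c v (br u w) + (c w (br u v) + 0) = 0
    have : c v (br u w) + c w (br u v) = 0 := by
      rw [← h]; abel
    linear_combination (norm := abel) this
  -- Step 3: br is antisymmetric
  have anti : ∀ u v : V, br u v = - br v u := by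
    intro u v
    have h := hlie (u + v)
    simp only [map_add, LinearMap.add_apply] at h
    rw [hlie u, hlie v] at h
    have : br u v + br v u = 0 := by rw [← h]; abel
    linear_combination (norm := abel) this
  intro v v' v''
  rw [pol v' v v'', anti v' v]
  simp [hsym v'' (br v v')]
end

section
/- Every left Leibniz algebra (V, [·,·]) is canonically a symmetric enhanced Leibniz algebra: taking W := Sq(V) (the span of the squares [v,v]), t : Sq(V) → V the inclusion, and u ∘ v := (1/2)([u,v] + [v,u]) ∈ Sq(V), the four axioms hold; explicitly, for all u, v, x ∈ V one has [[u,v] + [v,u], x] = 0 and [u,[v,v]] + [[v,v],u] = [v,[u,v]] + [[u,v],v]. -/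
/-- Every left Leibniz algebra is canonically a symmetric enhanced Leibniz algebra,
with `W := Sq(V)`, `t` the inclusion, and `u ∘ v := (1/2)([u,v] + [v,u])`. -/
theorem leibniz_canonical_sELA
    {K : Type*} [Field K] (h2 : (2 : K) ≠ 0)
    {V : Type*} [AddCommGroup V] [Module K V]
    (br : V →ₗ[K] V →ₗ[K] V)
    (leib : ∀ v₁ v₂ v₃ : V, br v₁ (br v₂ v₃) = br (br v₁ v₂) v₃ + br v₂ (br v₁ v₃)) :
    (∀ u v : V, br u v + br v u ∈ Submodule.span K {x : V | ∃ v : V, x = br v v}) ∧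
    (∀ x ∈ Submodule.span K {x : V | ∃ v : V, x = br v v}, ∀ y : V, br x y = 0) ∧
    (∀ u v x : V, br (br u v + br v u) x = 0) ∧
    (∀ u v : V, br u (br v v) + br (br v v) u = br v (br u v) + br (br u v) v) := by
  have hsq : ∀ v x : V, br (br v v) x = 0 := by
    intro v x
    have h := leib v v x
    have : br v (br v x) = br (br v v) x + br v (br v x) := h
    exact right_eq_add.mp h
  have hmem : ∀ u v : V, br u v + br v u ∈
      Submodule.span K {x : V | ∃ v : V, x = br v v} := by
    intro u v
    have h : br u v + br v u = br (u + v) (u + v) - br u u - br v v := by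
      simp [map_add]; abel
    rw [h]
    have h1 : br (u + v) (u + v) ∈ Submodule.span K {x : V | ∃ v : V, x = br v v} :=
      Submodule.subset_span ⟨u + v, rfl⟩
    have h2' : br u u ∈ Submodule.span K {x : V | ∃ v : V, x = br v v} :=
      Submodule.subset_span ⟨u, rfl⟩
    have h3 : br v v ∈ Submodule.span K {x : V | ∃ v : V, x = br v v} :=
      Submodule.subset_span ⟨v, rfl⟩
    exact Submodule.sub_mem _ (Submodule.sub_mem _ h1 h2') h3
  have hspan : ∀ x ∈ Submodule.span K {x : V | ∃ v : V, x = br v v}, ∀ y : V, br x y = 0 := by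
    intro x hx
    induction hx using Submodule.span_induction with
    | mem x hx => obtain ⟨v, rfl⟩ := hx; exact hsq v
    | zero => simp
    | add x y _ _ hx hy => intro z; simp [hx z, hy z]
    | smul c x _ hx => intro z; simp [hx z]
  refine ⟨hmem, hspan, fun u v x => hspan _ (hmem u v) x, fun u v => ?_⟩
  rw [hsq v u]
  rw [add_zero, leib u v v]; abel
end

section
/- β-transformation of an enhanced Leibniz algebra: if (t : W → V, [·,·], ∘) is an enhanced Leibniz algebra and β : V × V → W is an alternating bilinear map (β(v,v) = 0 for all v), then (t : W → V, [·,·], ∘') with u ∘' v := u ∘ v + β(u,v) is again an enhanced Leibniz algebra, i.e. satisfies axioms (a)–(d). -/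
/-- β-transformation of an enhanced Leibniz algebra: adding an alternating bilinear
map `β` to the circle product again yields an enhanced Leibniz algebra. -/
theorem ela_beta_transform
    {K : Type*} [Field K] (h2 : (2 : K) ≠ 0)
    {V W : Type*} [AddCommGroup V] [Module K V] [AddCommGroup W] [Module K W]
    (t : W →ₗ[K] V) (br : V →ₗ[K] V →ₗ[K] V) (c : V →ₗ[K] V →ₗ[K] W)
    (leib : ∀ v₁ v₂ v₃ : V, br v₁ (br v₂ v₃) = br (br v₁ v₂) v₃ + br v₂ (br v₁ v₃))
    (axa : ∀ (w : W) (v : V), br (t w) v = 0)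
    (axb : ∀ w : W, c (t w) (t w) = 0)
    (axc : ∀ u v : V, (2 : K)⁻¹ • (c u (br v v) + c (br v v) u)
            = (2 : K)⁻¹ • (c v (br u v) + c (br u v) v))
    (axd : ∀ v : V, br v v = t (c v v))
    (β : V →ₗ[K] V →ₗ[K] W) (halt : ∀ v : V, β v v = 0) :
    (∀ (w : W) (v : V), br (t w) v = 0) ∧
    (∀ w : W, c (t w) (t w) + β (t w) (t w) = 0) ∧
    (∀ u v : V,
        (2 : K)⁻¹ • ((c u (br v v) + β u (br v v)) + (c (br v v) u + β (br v v) u))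
          = (2 : K)⁻¹ • ((c v (br u v) + β v (br u v)) + (c (br u v) v + β (br u v) v))) ∧
    (∀ v : V, br v v = t (c v v + β v v)) := by
  have hskew : ∀ u v : V, β u v + β v u = 0 := by
    intro u v
    have h := halt (u + v)
    simp only [map_add, LinearMap.add_apply, halt] at h
    rw [add_comm]; simpa using h
  refine ⟨axa, fun w => by rw [axb, halt]; simp, fun u v => ?_, fun v => by rw [halt, add_zero]; exact axd v⟩
  have h1 := hskew u (br v v)
  have h2 := hskew v (br u v)
  calc (2 : K)⁻¹ • ((c u (br v v) + β u (br v v)) + (c (br v v) u + β (br v v) u))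
      = (2 : K)⁻¹ • (c u (br v v) + c (br v v) u) := by
        rw [show (c u (br v v) + β u (br v v)) + (c (br v v) u + β (br v v) u)
            = (c u (br v v) + c (br v v) u) + (β u (br v v) + β (br v v) u) by abel, h1, add_zero]
    _ = (2 : K)⁻¹ • (c v (br u v) + c (br u v) v) := axc u v
    _ = _ := by
        rw [show (c v (br u v) + β v (br u v)) + (c (br u v) v + β (br u v) v)
            = (c v (br u v) + c (br u v) v) + (β v (br u v) + β (br u v) v) by abel, h2, add_zero]
end

section
/- The adjoint representation of an enhanced Leibniz algebra on W represents the bracket: defining ρ(u)·w := 2 (u ∘ˢ t(w)) for u ∈ V and w ∈ W, one has ρ(u)(ρ(v)·w) − ρ(v)(ρ(u)·w) = ρ([u,v])·w for all u, v ∈ V and w ∈ W. -/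
/-- The adjoint action of an enhanced Leibniz algebra on `W`:
`ρ(u)·w := 2 (u ∘ˢ t(w))`. -/
def elaAdjW {K V W : Type*} [Field K] [AddCommGroup V] [Module K V]
    [AddCommGroup W] [Module K W]
    (t : W →ₗ[K] V) (c : V →ₗ[K] V →ₗ[K] W) (u : V) (w : W) : W :=
  (2 : K) • ((2 : K)⁻¹ • (c u (t w) + c (t w) u))

/-- The adjoint representation of an enhanced Leibniz algebra on `W` represents the
bracket. -/
theorem ela_adjoint_represents
    {K : Type*} [Field K] (h2 : (2 : K) ≠ 0)
    {V W : Type*} [AddCommGroup V] [Module K V] [AddCommGroup W] [Module K W]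
    (t : W →ₗ[K] V) (br : V →ₗ[K] V →ₗ[K] V) (c : V →ₗ[K] V →ₗ[K] W)
    (leib : ∀ v₁ v₂ v₃ : V, br v₁ (br v₂ v₃) = br (br v₁ v₂) v₃ + br v₂ (br v₁ v₃))
    (axa : ∀ (w : W) (v : V), br (t w) v = 0)
    (axb : ∀ w : W, c (t w) (t w) = 0)
    (axc : ∀ u v : V, (2 : K)⁻¹ • (c u (br v v) + c (br v v) u)
            = (2 : K)⁻¹ • (c v (br u v) + c (br u v) v))
    (axd : ∀ v : V, br v v = t (c v v)) :
    ∀ (u v : V) (w : W),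
      elaAdjW t c u (elaAdjW t c v w) - elaAdjW t c v (elaAdjW t c u w)
        = elaAdjW t c (br u v) w := by
  intro u v w
  have hAdj : ∀ (a : V) (b : W), elaAdjW t c a b = c a (t b) + c (t b) a := by
    intro a b
    unfold elaAdjW
    rw [smul_smul, mul_inv_cancel₀ h2, one_smul]
  have axc' : ∀ a b : V, c a (br b b) + c (br b b) a = c b (br a b) + c (br a b) b := by
    intro a b
    exact smul_right_injective W (inv_ne_zero h2) (axc a b)
  have h4 : ∀ a : V, t (c a (t w) + c (t w) a) = br a (t w) := by
    intro a
    have hd := axd (a + t w)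
    simp only [map_add, LinearMap.add_apply, axa w, axd a, axb w, map_zero] at hd
    rw [map_add]
    linear_combination (norm := abel) -hd
  have hz : ∀ a : V, c (t w) (br a a) + c (br a a) (t w) = 0 := by
    intro a
    have h := axc' (t w) a
    rw [axa w a] at h
    simp only [map_zero, LinearMap.zero_apply, add_zero] at h
    exact h
  have hzx : ∀ a : V, c (t w) (br a (t w)) + c (br a (t w)) (t w) = 0 := by
    intro a
    have h1 := hz (a + t w)
    simp only [map_add, LinearMap.add_apply, axa w, map_zero, LinearMap.zero_apply,
      add_zero, zero_add] at h1
    have h2' := hz a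
    linear_combination (norm := abel) h1 - h2'
  have key : c u (br v (t w)) + c (br v (t w)) u
      = c v (br u (t w)) + c (br u (t w)) v
        + (c (br u v) (t w) + c (t w) (br u v)) := by
    have hp := axc' u (v + t w)
    simp only [map_add, LinearMap.add_apply, axa w, map_zero, LinearMap.zero_apply,
      add_zero, zero_add] at hp
    have h0 := axc' u v
    have h1 := hzx u
    linear_combination (norm := abel) hp - h0 + h1
  rw [hAdj v w, hAdj u w, hAdj u, hAdj v, hAdj (br u v) w, h4 v, h4 u]
  linear_combination (norm := abel) key
end

section
/- In a symmetric enhanced Leibniz algebra with injective t, the pair (V, im(t)) is a Leibniz couple, i.e. Sq(V) ⊆ im(t) ⊆ Z_L(V), and the circle product is uniquely determined by the bracket: t(v₁ ∘ v₂) = (1/2)([v₁,v₂] + [v₂,v₁]) for all v₁, v₂ ∈ V. -/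
/-- In a symmetric enhanced Leibniz algebra with injective `t`, the pair
`(V, im(t))` is a Leibniz couple and the circle product is determined by the
bracket. -/
theorem sela_injective_leibniz_couple
    {K : Type*} [Field K] (h2 : (2 : K) ≠ 0)
    {V W : Type*} [AddCommGroup V] [Module K V] [AddCommGroup W] [Module K W]
    (t : W →ₗ[K] V) (br : V →ₗ[K] V →ₗ[K] V) (c : V →ₗ[K] V →ₗ[K] W)
    (leib : ∀ v₁ v₂ v₃ : V, br v₁ (br v₂ v₃) = br (br v₁ v₂) v₃ + br v₂ (br v₁ v₃))
    (axa : ∀ (w : W) (v : V), br (t w) v = 0)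
    (axb : ∀ w : W, c (t w) (t w) = 0)
    (axc : ∀ u v : V, (2 : K)⁻¹ • (c u (br v v) + c (br v v) u)
            = (2 : K)⁻¹ • (c v (br u v) + c (br u v) v))
    (axd : ∀ v : V, br v v = t (c v v))
    (hsym : ∀ u v : V, c u v = c v u)
    (hinj : Function.Injective t) :
    (Submodule.span K {x : V | ∃ v : V, x = br v v} ≤ LinearMap.range t) ∧
    (∀ x ∈ LinearMap.range t, ∀ y : V, br x y = 0) ∧
    (∀ v₁ v₂ : V, t (c v₁ v₂) = (2 : K)⁻¹ • (br v₁ v₂ + br v₂ v₁)) := by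
  refine ⟨?_, ?_, ?_⟩
  · rw [Submodule.span_le]
    rintro x ⟨v, rfl⟩
    exact ⟨c v v, (axd v).symm⟩
  · rintro x ⟨w, rfl⟩ y
    exact axa w y
  · intro u v
    have h := axd (u + v)
    simp only [map_add, LinearMap.add_apply, hsym v u, ← axd u, ← axd v] at h
    set a := br u u
    set b := br v v
    set x := br u v
    set y := br v u
    set s := t (c u v)
    have h1 : x + y = s + s := by
      apply add_left_cancel (a := a + b)
      calc a + b + (x + y) = a + y + (x + b) := by abel
        _ = a + s + (s + b) := h
        _ = a + b + (s + s) := by abel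
    rw [h1, ← two_smul K, smul_smul, inv_mul_cancel₀ h2, one_smul]
end

section
/- Let (V, [·,·]) be a left Leibniz algebra, t : W → V a linear map such that Sq(V) ⊆ im(t) ⊆ Z_L(V), and σ : V → W a linear map (defined on im(t), extended linearly) such that t(σ(x)) = x for all x ∈ im(t). Then the product u ∘_σ v := (1/2) σ([u,v] + [v,u]) (well-defined since [u,v]+[v,u] ∈ Sq(V) ⊆ im(t)) turns (t : W → V, [·,·], ∘_σ) into a symmetric enhanced Leibniz algebra, i.e. ∘_σ is symmetric and axioms (a)–(d) hold. -/
/-- Given a Leibniz algebra `V`, `t : W → V` with `Sq(V) ⊆ im(t) ⊆ Z_L(V)`, and a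
splitting `σ` of `t` over `im(t)`, the product `u ∘_σ v := (1/2)σ([u,v]+[v,u])`
turns the data into a symmetric enhanced Leibniz algebra. -/
theorem sela_from_splitting
    {K : Type*} [Field K] (h2 : (2 : K) ≠ 0)
    {V W : Type*} [AddCommGroup V] [Module K V] [AddCommGroup W] [Module K W]
    (t : W →ₗ[K] V) (br : V →ₗ[K] V →ₗ[K] V)
    (leib : ∀ v₁ v₂ v₃ : V, br v₁ (br v₂ v₃) = br (br v₁ v₂) v₃ + br v₂ (br v₁ v₃))
    (hSq : Submodule.span K {x : V | ∃ v : V, x = br v v} ≤ LinearMap.range t)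
    (hZ : ∀ x ∈ LinearMap.range t, ∀ y : V, br x y = 0)
    (σ : V →ₗ[K] W) (hσ : ∀ x ∈ LinearMap.range t, t (σ x) = x) :
    (∀ u v : V, (2 : K)⁻¹ • σ (br u v + br v u) = (2 : K)⁻¹ • σ (br v u + br u v)) ∧
    (∀ (w : W) (v : V), br (t w) v = 0) ∧
    (∀ w : W, (2 : K)⁻¹ • σ (br (t w) (t w) + br (t w) (t w)) = 0) ∧
    (∀ u v : V, (2 : K)⁻¹ • σ (br u (br v v) + br (br v v) u)
        = (2 : K)⁻¹ • σ (br v (br u v) + br (br u v) v)) ∧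
    (∀ v : V, br v v = t ((2 : K)⁻¹ • σ (br v v + br v v))) := by
  have hsq_mem : ∀ v : V, br v v ∈ LinearMap.range t := fun v =>
    hSq (Submodule.subset_span ⟨v, rfl⟩)
  have hsym_mem : ∀ u v : V, br u v + br v u ∈ LinearMap.range t := by
    intro u v
    have h : br u v + br v u = br (u+v) (u+v) - br u u - br v v := by
      simp [map_add]; abel
    rw [h]
    exact sub_mem (sub_mem (hsq_mem _) (hsq_mem _)) (hsq_mem _)
  refine ⟨fun u v => by rw [add_comm (br u v)], fun w v => hZ _ ⟨w, rfl⟩ v, ?_, ?_, ?_⟩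
  · intro w
    have h1 : br (t w) (t w) = 0 := hZ _ ⟨w, rfl⟩ _
    simp [h1]
  · intro u v
    congr 1
    congr 1
    have h1 : br (br v v) u = 0 := hZ _ (hsq_mem v) u
    have h2 : br (br u v + br v u) v = 0 := hZ _ (hsym_mem u v) v
    have h3 : br v (br u v) = br (br v u) v + br u (br v v) := leib v u v
    rw [h1, h3]
    simp only [map_add, LinearMap.add_apply] at h2
    have h4 : br (br u v) v = - br (br v u) v := by
      rw [eq_neg_iff_add_eq_zero]; exact h2
    rw [h4]; abel
  · intro v
    have h1 : t (σ (br v v)) = br v v := hσ _ (hsq_mem v)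
    rw [map_add, map_smul, map_add, h1, smul_add, ← add_smul]
    have h12 : (2:K)⁻¹ + (2:K)⁻¹ = 1 := by rw [← two_mul, mul_inv_cancel₀ h2]
    rw [h12, one_smul]
end

section
/- The coboundary operator d of the short complex associated to a Leibniz algebra squares to zero: for any left Leibniz algebra (V,[·,·]), vector space U, and linear map δ : V → U, defining (dδ)(u,v) := (1/2)δ([u,v]) + (1/2)δ([v,u]) (a symmetric bilinear form) and, for a symmetric bilinear Δ : V × V → U, (dΔ)(v₀,v₁,v₂) := Δ([v₀,v₁],v₂) + Δ(v₁,[v₀,v₂]) − Δ(v₀,[v₁,v₂]) − Δ(v₀,[v₂,v₁]), one has d(dδ) = 0, i.e. (d(dδ))(v₀,v₁,v₂) = 0 for all v₀, v₁, v₂ ∈ V. -/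
/-- The coboundary operator `d` of the short complex associated to a Leibniz
algebra squares to zero: `d(dδ) = 0` for every linear map `δ : V → U`. -/
theorem leibniz_d_squared_zero
    {K : Type*} [Field K] (h2 : (2 : K) ≠ 0)
    {V U : Type*} [AddCommGroup V] [Module K V] [AddCommGroup U] [Module K U]
    (br : V →ₗ[K] V →ₗ[K] V)
    (leib : ∀ v₁ v₂ v₃ : V, br v₁ (br v₂ v₃) = br (br v₁ v₂) v₃ + br v₂ (br v₁ v₃))
    (δ : V →ₗ[K] U) :
    ∀ v₀ v₁ v₂ : V,
      ((2 : K)⁻¹ • (δ (br (br v₀ v₁) v₂) + δ (br v₂ (br v₀ v₁))))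
      + ((2 : K)⁻¹ • (δ (br v₁ (br v₀ v₂)) + δ (br (br v₀ v₂) v₁)))
      - ((2 : K)⁻¹ • (δ (br v₀ (br v₁ v₂)) + δ (br (br v₁ v₂) v₀)))
      - ((2 : K)⁻¹ • (δ (br v₀ (br v₂ v₁)) + δ (br (br v₂ v₁) v₀))) = 0 := by
  intro v₀ v₁ v₂
  -- In a Leibniz algebra, [[a,b],c] + [[b,a],c] = 0.
  have key : ∀ a b c : V, br (br a b) c + br (br b a) c = 0 := by
    intro a b c
    have h1 := leib a b c
    have h2 := leib b a c
    have h1' : br (br a b) c = br a (br b c) - br b (br a c) := by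
      rw [h1]; abel
    have h2' : br (br b a) c = br b (br a c) - br a (br b c) := by
      rw [h2]; abel
    rw [h1', h2']; abel
  have k1 := key v₁ v₂ v₀
  have k1' : br (br v₂ v₁) v₀ = - br (br v₁ v₂) v₀ :=
    eq_neg_of_add_eq_zero_left (key v₂ v₁ v₀)
  have hX : (br (br v₀ v₁) v₂ + br v₂ (br v₀ v₁))
      + (br v₁ (br v₀ v₂) + br (br v₀ v₂) v₁)
      - (br v₀ (br v₁ v₂) + br (br v₁ v₂) v₀)
      - (br v₀ (br v₂ v₁) + br (br v₂ v₁) v₀) = (0 : V) := by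
    rw [leib v₀ v₁ v₂, leib v₀ v₂ v₁, k1']
    abel
  have hδ := congrArg δ hX
  simp only [map_add, map_sub, map_zero] at hδ
  rw [← smul_add, ← smul_sub, ← smul_sub, hδ, smul_zero]
end

section
/- Equivariance of t in an enhanced Leibniz algebra: with v ∗ w := t(w) ∘ v and {v₁,v₂} := [v₁,v₂] − t(v₁ ∘ v₂), one has t(v ∗ w) = {v, t(w)} for all v ∈ V and w ∈ W, i.e. t(t(w) ∘ v) = [v, t(w)] − t(v ∘ t(w)); moreover the second Peiffer relation t(h) ∗ k = −t(k) ∗ h holds for all h, k ∈ W. -/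
/-- Equivariance of `t` and the second Peiffer relation in an enhanced Leibniz
algebra: with `v ∗ w := t(w) ∘ v` and `{v₁,v₂} := [v₁,v₂] − t(v₁ ∘ v₂)`, one has
`t(v ∗ w) = {v, t(w)}` and `t(h) ∗ k = −t(k) ∗ h`. -/
theorem ela_equivariance_and_peiffer
    {K : Type*} [Field K] (h2 : (2 : K) ≠ 0)
    {V W : Type*} [AddCommGroup V] [Module K V] [AddCommGroup W] [Module K W]
    (t : W →ₗ[K] V) (br : V →ₗ[K] V →ₗ[K] V) (c : V →ₗ[K] V →ₗ[K] W)
    (leib : ∀ v₁ v₂ v₃ : V, br v₁ (br v₂ v₃) = br (br v₁ v₂) v₃ + br v₂ (br v₁ v₃))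
    (axa : ∀ (w : W) (v : V), br (t w) v = 0)
    (axb : ∀ w : W, c (t w) (t w) = 0)
    (axc : ∀ u v : V, (2 : K)⁻¹ • (c u (br v v) + c (br v v) u)
            = (2 : K)⁻¹ • (c v (br u v) + c (br u v) v))
    (axd : ∀ v : V, br v v = t (c v v)) :
    (∀ (v : V) (w : W), t (c (t w) v) = br v (t w) - t (c v (t w))) ∧
    (∀ h k : W, c (t k) (t h) = - c (t h) (t k)) := by
  constructor
  · intro v w
    have e := axd (v + t w)
    simp only [map_add, LinearMap.add_apply, axa, axd v, axb, map_zero, add_zero,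
      zero_add] at e
    rw [add_assoc] at e
    have e' := add_left_cancel e
    rw [e']; abel
  · intro h k
    have e := axb (h + k)
    simp only [map_add, LinearMap.add_apply, axb, add_zero, zero_add] at e
    exact eq_neg_of_add_eq_zero_left e
end
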